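/- For fixed k ≥ 1, the formal power series E_k(z) = Σ_{n ≥ 0} A(n,k) z^n (generating function of the k-th column of the Eulerian triangle) has the partial fraction decomposition E_k(z) = 1/(1−kz) + Σ_{j=1}^{k-1} (−1)^j ((k−j)z)^{j−1} / (1−(k−j)z)^{j+1}. -/

import Mathlib

open PowerSeries

private lemma coeff_mul_one_sub (f : PowerSeries ℚ) (c : ℚ) (n : ℕ) :
    (PowerSeries.coeff (n+1)) (f * (1 - PowerSeries.C c * PowerSeries.X)) =
      (PowerSeries.coeff (n+1)) f - c * (PowerSeries.coeff n) f := by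
  have : f * (1 - PowerSeries.C c * PowerSeries.X)
      = f - PowerSeries.C c * (f * PowerSeries.X) := by ring
  rw [this, map_sub, PowerSeries.coeff_C_mul, PowerSeries.coeff_succ_mul_X]

private lemma coeff_zero_mul_one_sub (f : PowerSeries ℚ) (c : ℚ) :
    (PowerSeries.coeff 0) (f * (1 - PowerSeries.C c * PowerSeries.X)) =
      (PowerSeries.coeff 0) f := by
  have : f * (1 - PowerSeries.C c * PowerSeries.X)
      = f - PowerSeries.C c * (f * PowerSeries.X) := by ring
  rw [this, map_sub, PowerSeries.coeff_C_mul, PowerSeries.coeff_zero_mul_X, mul_zero, sub_zero]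

private lemma shift (c : ℚ) (j : ℕ) :
    (PowerSeries.mk fun n => c ^ n * ((n+1).choose (j+1) : ℚ)) *
        (1 - PowerSeries.C c * PowerSeries.X)
      = PowerSeries.C c * PowerSeries.X *
          (PowerSeries.mk fun n => c ^ n * ((n+1).choose j : ℚ))
        + PowerSeries.C (if j = 0 then 1 else 0) := by
  ext n
  cases n with
  | zero =>
    rw [coeff_zero_mul_one_sub]
    have h2 : PowerSeries.C c * PowerSeries.X *
        (PowerSeries.mk fun n => c ^ n * ((n+1).choose j : ℚ))
        = PowerSeries.C c * ((PowerSeries.mk fun n => c ^ n * ((n+1).choose j : ℚ))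
          * PowerSeries.X) := by ring
    rw [map_add, h2, PowerSeries.coeff_C_mul, PowerSeries.coeff_zero_mul_X, PowerSeries.coeff_C]
    simp only [PowerSeries.coeff_mk, pow_zero, one_mul, mul_zero, zero_add, if_pos rfl]
    rcases j with _ | j
    · simp
    · simp [Nat.choose_eq_zero_of_lt (by omega : (1:ℕ) < j+1+1)]
  | succ n =>
    rw [coeff_mul_one_sub]
    have h2 : PowerSeries.C c * PowerSeries.X *
        (PowerSeries.mk fun n => c ^ n * ((n+1).choose j : ℚ))
        = PowerSeries.C c * ((PowerSeries.mk fun n => c ^ n * ((n+1).choose j : ℚ))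
          * PowerSeries.X) := by ring
    rw [map_add, h2, PowerSeries.coeff_C_mul, PowerSeries.coeff_succ_mul_X, PowerSeries.coeff_C]
    simp only [PowerSeries.coeff_mk, Nat.succ_ne_zero, if_false, add_zero]
    have hpascal : ((n+2).choose (j+1) : ℚ) = ((n+1).choose j : ℚ) + ((n+1).choose (j+1) : ℚ) := by
      rw [← Nat.cast_add]
      norm_cast
    rw [pow_succ]
    rw [hpascal]
    ring


private lemma key (c : ℚ) (j : ℕ) :
    (PowerSeries.mk fun n => c ^ n * ((n+1).choose j : ℚ)) *
        (1 - PowerSeries.C c * PowerSeries.X) ^ (j+1)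
      = (PowerSeries.C c * PowerSeries.X) ^ (j - 1) := by
  induction j with
  | zero =>
    rw [pow_one, pow_zero]
    ext n
    cases n with
    | zero => rw [coeff_zero_mul_one_sub]; simp
    | succ n => rw [coeff_mul_one_sub]; simp [pow_succ]; ring
  | succ j ih =>
    have h : (1 - PowerSeries.C c * PowerSeries.X) ^ (j+2)
        = (1 - PowerSeries.C c * PowerSeries.X) *
          (1 - PowerSeries.C c * PowerSeries.X) ^ (j+1) := by
      rw [← pow_succ']
    calc (PowerSeries.mk fun n => c ^ n * ((n+1).choose (j+1) : ℚ)) *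
        (1 - PowerSeries.C c * PowerSeries.X) ^ (j+1+1)
        = ((PowerSeries.mk fun n => c ^ n * ((n+1).choose (j+1) : ℚ)) *
            (1 - PowerSeries.C c * PowerSeries.X)) *
          (1 - PowerSeries.C c * PowerSeries.X) ^ (j+1) := by rw [h]; ring
      _ = (PowerSeries.C c * PowerSeries.X *
            (PowerSeries.mk fun n => c ^ n * ((n+1).choose j : ℚ))
            + PowerSeries.C (if j = 0 then 1 else 0)) *
          (1 - PowerSeries.C c * PowerSeries.X) ^ (j+1) := by rw [shift]
      _ = PowerSeries.C c * PowerSeries.X * (PowerSeries.C c * PowerSeries.X) ^ (j-1)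
            + PowerSeries.C (if j = 0 then 1 else 0) *
              (1 - PowerSeries.C c * PowerSeries.X) ^ (j+1) := by
          rw [add_mul, mul_assoc, ih]
      _ = (PowerSeries.C c * PowerSeries.X) ^ (j+1-1) := by
          rcases j with _ | j
          · simp
          · simp only [Nat.succ_ne_zero, if_false, map_zero, zero_mul, add_zero,
              Nat.add_sub_cancel]
            rw [← pow_succ']

private lemma Fval (c : ℚ) (j : ℕ) :
    (PowerSeries.mk fun n => c ^ n * ((n+1).choose j : ℚ))
      = (PowerSeries.C c * PowerSeries.X) ^ (j - 1) *
        ((1 - PowerSeries.C c * PowerSeries.X) ^ (j+1))⁻¹ := by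
  rw [PowerSeries.eq_mul_inv_iff_mul_eq, key]
  simp [constantCoeff_X]

theorem eulerian_column_partial_fraction (k : ℕ) (hk : 1 ≤ k) :
    (PowerSeries.mk fun n => ∑ j ∈ Finset.range k,
        (-1 : ℚ) ^ j * ((k - j : ℕ) : ℚ) ^ n * ((n + 1).choose j : ℚ)) =
      (1 - PowerSeries.C (k : ℚ) * PowerSeries.X)⁻¹ +
      ∑ j ∈ Finset.Icc 1 (k - 1),
        (-1 : PowerSeries ℚ) ^ j *
          (PowerSeries.C ((k - j : ℕ) : ℚ) * PowerSeries.X) ^ (j - 1) *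
          ((1 - PowerSeries.C ((k - j : ℕ) : ℚ) * PowerSeries.X) ^ (j + 1))⁻¹ := by
  have hstep : (PowerSeries.mk fun n => ∑ j ∈ Finset.range k,
        (-1 : ℚ) ^ j * ((k - j : ℕ) : ℚ) ^ n * ((n + 1).choose j : ℚ))
      = ∑ j ∈ Finset.range k, (-1 : PowerSeries ℚ) ^ j *
          (PowerSeries.C ((k - j : ℕ) : ℚ) * PowerSeries.X) ^ (j - 1) *
          ((1 - PowerSeries.C ((k - j : ℕ) : ℚ) * PowerSeries.X) ^ (j + 1))⁻¹ := by
    have h1 : (PowerSeries.mk fun n => ∑ j ∈ Finset.range k,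
        (-1 : ℚ) ^ j * ((k - j : ℕ) : ℚ) ^ n * ((n + 1).choose j : ℚ))
      = ∑ j ∈ Finset.range k, PowerSeries.C ((-1 : ℚ) ^ j) *
          PowerSeries.mk (fun n => ((k - j : ℕ) : ℚ) ^ n * ((n + 1).choose j : ℚ)) := by
      ext n
      rw [PowerSeries.coeff_mk, map_sum]
      refine Finset.sum_congr rfl fun j _ => ?_
      rw [PowerSeries.coeff_C_mul, PowerSeries.coeff_mk]
      ring
    rw [h1]
    refine Finset.sum_congr rfl fun j _ => ?_
    rw [Fval]
    have : PowerSeries.C ((-1 : ℚ) ^ j) = (-1 : PowerSeries ℚ) ^ j := by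
      rw [map_pow, map_neg, map_one]
    rw [this, mul_assoc]
  rw [hstep]
  have hset : Finset.range k = insert 0 (Finset.Icc 1 (k - 1)) := by
    ext x
    simp only [Finset.mem_range, Finset.mem_insert, Finset.mem_Icc]
    omega
  rw [hset, Finset.sum_insert (by simp)]
  congr 1
  simp [pow_one]
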